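/- arXiv:1704.04566 — 2 statements merged into one kernel-verified Lean document; each statement's English description precedes it below -/
import Mathlib

section
/- Let K_θ, K, D_max, ε be positive constants. Let x, y, θ, x_d, y_d, θ_d : ℝ → ℝ and fix a time t₀ at which x_d, y_d, θ_d are differentiable. Define e_x = x − x_d, e_y = y − y_d, e_θ = θ − θ_d, and D = √(e_x² + e_y²), and assume D(t₀) > 0, cos(θ_d(t₀)) = −e_x(t₀)/D(t₀), and sin(θ_d(t₀)) = −e_y(t₀)/D(t₀). Suppose that at t₀: x has derivative v·cos(θ(t₀)), y has derivative v·sin(θ(t₀)), and θ has derivative u, where v = K·cos(e_θ(t₀))·min(D_max, D(t₀)) and u = −K_θ·e_θ(t₀) + w for some real w with |w − θ_d'(t₀)| ≤ ε. Then the function V_t = (1/2)(e_x² + e_y² + e_θ²) has a derivative at t₀ that is at most −K_a·(e_x(t₀)² + e_y(t₀)²) − K_θ·e_θ(t₀)² + ε·|e_θ(t₀)| − e_x(t₀)·x_d'(t₀) − e_y(t₀)·y_d'(t₀), where K_a = K·(min(D_max, D(t₀))/D(t₀))·cos²(e_θ(t₀)); consequently the derivative is at most −min(K_a, K_θ)·(e_x²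 + e_y² + e_θ²)(t₀) + ‖(e_x(t₀), e_y(t₀), e_θ(t₀))‖·‖(x_d'(t₀), y_d'(t₀), ε)‖. -/
lemma cs3_aux (a b c p q r : ℝ) :
    a * p + b * q + c * r ≤ Real.sqrt (a ^ 2 + b ^ 2 + c ^ 2) * Real.sqrt (p ^ 2 + q ^ 2 + r ^ 2) := by
  have hcs : (a * p + b * q + c * r) ^ 2
      ≤ (a ^ 2 + b ^ 2 + c ^ 2) * (p ^ 2 + q ^ 2 + r ^ 2) := by
    nlinarith [sq_nonneg (a * q - b * p), sq_nonneg (a * r - c * p), sq_nonneg (b * r - c * q)]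
  calc a * p + b * q + c * r ≤ |a * p + b * q + c * r| := le_abs_self _
  _ = Real.sqrt ((a * p + b * q + c * r) ^ 2) := (Real.sqrt_sq_eq_abs _).symm
  _ ≤ Real.sqrt ((a ^ 2 + b ^ 2 + c ^ 2) * (p ^ 2 + q ^ 2 + r ^ 2)) := Real.sqrt_le_sqrt hcs
  _ = _ := Real.sqrt_mul (by positivity) _


theorem lyapunov_derivative_bound
    (Kθ K Dmax ε : ℝ) (hKθ : 0 < Kθ) (hK : 0 < K) (hDmax : 0 < Dmax) (hε : 0 < ε)
    (x y θ xd yd θd : ℝ → ℝ) (t₀ : ℝ) (xd' yd' θd' w : ℝ)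
    (hxd : HasDerivAt xd xd' t₀) (hyd : HasDerivAt yd yd' t₀)
    (hθd : HasDerivAt θd θd' t₀)
    (ex ey eθ : ℝ → ℝ)
    (hex : ex = fun t => x t - xd t) (hey : ey = fun t => y t - yd t)
    (heθ : eθ = fun t => θ t - θd t)
    (D : ℝ → ℝ) (hDdef : D = fun t => Real.sqrt (ex t ^ 2 + ey t ^ 2))
    (hD : 0 < D t₀)
    (hcos : Real.cos (θd t₀) = -ex t₀ / D t₀)
    (hsin : Real.sin (θd t₀) = -ey t₀ / D t₀)
    (v : ℝ) (hv : v = K * Real.cos (eθ t₀) * min Dmax (D t₀))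
    (hx : HasDerivAt x (v * Real.cos (θ t₀)) t₀)
    (hy : HasDerivAt y (v * Real.sin (θ t₀)) t₀)
    (u : ℝ) (hu : u = -Kθ * eθ t₀ + w) (hw : |w - θd'| ≤ ε)
    (hθ : HasDerivAt θ u t₀)
    (Ka : ℝ) (hKa : Ka = K * (min Dmax (D t₀) / D t₀) * Real.cos (eθ t₀) ^ 2) :
    ∃ V' : ℝ,
      HasDerivAt (fun t => (1 / 2) * (ex t ^ 2 + ey t ^ 2 + eθ t ^ 2)) V' t₀ ∧
      V' ≤ -Ka * (ex t₀ ^ 2 + ey t₀ ^ 2) - Kθ * eθ t₀ ^ 2 + ε * |eθ t₀|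
            - ex t₀ * xd' - ey t₀ * yd' ∧
      V' ≤ -min Ka Kθ * (ex t₀ ^ 2 + ey t₀ ^ 2 + eθ t₀ ^ 2)
            + Real.sqrt (ex t₀ ^ 2 + ey t₀ ^ 2 + eθ t₀ ^ 2)
              * Real.sqrt (xd' ^ 2 + yd' ^ 2 + ε ^ 2) := by
  have hexd : HasDerivAt ex (v * Real.cos (θ t₀) - xd') t₀ := by
    rw [hex]; exact hx.sub hxd
  have heyd : HasDerivAt ey (v * Real.sin (θ t₀) - yd') t₀ := by
    rw [hey]; exact hy.sub hyd
  have heθd : HasDerivAt eθ (u - θd') t₀ := by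
    rw [heθ]; exact hθ.sub hθd
  set V' : ℝ := (1/2) * (2 * ex t₀ * (v * Real.cos (θ t₀) - xd')
      + 2 * ey t₀ * (v * Real.sin (θ t₀) - yd') + 2 * eθ t₀ * (u - θd')) with hV'
  have hDeriv : HasDerivAt (fun t => (1 / 2) * (ex t ^ 2 + ey t ^ 2 + eθ t ^ 2)) V' t₀ := by
    have h1 := ((hexd.pow 2).add (heyd.pow 2)).add (heθd.pow 2)
    have h2 := h1.const_mul ((1:ℝ)/2)
    exact h2.congr_deriv (by rw [hV']; norm_num)
  have hD2 : D t₀ ^ 2 = ex t₀ ^ 2 + ey t₀ ^ 2 := by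
    rw [hDdef]; exact Real.sq_sqrt (by positivity)
  have hθeq : θ t₀ = eθ t₀ + θd t₀ := by rw [heθ]; ring
  have key : ex t₀ * (v * Real.cos (θ t₀)) + ey t₀ * (v * Real.sin (θ t₀))
      = -Ka * (ex t₀ ^ 2 + ey t₀ ^ 2) := by
    rw [hθeq, Real.cos_add, Real.sin_add, hcos, hsin, hv, hKa]
    field_simp
    ring_nf
  have heθbound : eθ t₀ * (w - θd') ≤ ε * |eθ t₀| := by
    calc eθ t₀ * (w - θd') ≤ |eθ t₀ * (w - θd')| := le_abs_self _
    _ = |eθ t₀| * |w - θd'| := abs_mul _ _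
    _ ≤ |eθ t₀| * ε := by
        exact mul_le_mul_of_nonneg_left hw (abs_nonneg _)
    _ = ε * |eθ t₀| := mul_comm _ _
  have bound1 : V' ≤ -Ka * (ex t₀ ^ 2 + ey t₀ ^ 2) - Kθ * eθ t₀ ^ 2 + ε * |eθ t₀|
      - ex t₀ * xd' - ey t₀ * yd' := by
    have : V' = -Ka * (ex t₀ ^ 2 + ey t₀ ^ 2) - Kθ * eθ t₀ ^ 2 + eθ t₀ * (w - θd')
        - ex t₀ * xd' - ey t₀ * yd' := by
      rw [hV', hu]; nlinarith [key]
    linarith [heθbound]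
  refine ⟨V', hDeriv, bound1, ?_⟩
  -- second bound
  have hmin1 : min Ka Kθ ≤ Ka := min_le_left _ _
  have hmin2 : min Ka Kθ ≤ Kθ := min_le_right _ _
  have hterm1 : -Ka * (ex t₀ ^ 2 + ey t₀ ^ 2) - Kθ * eθ t₀ ^ 2
      ≤ -min Ka Kθ * (ex t₀ ^ 2 + ey t₀ ^ 2 + eθ t₀ ^ 2) := by
    have hA : (0:ℝ) ≤ ex t₀ ^ 2 + ey t₀ ^ 2 := by positivity
    have hB : (0:ℝ) ≤ eθ t₀ ^ 2 := sq_nonneg _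
    have h1 := mul_le_mul_of_nonneg_right hmin1 hA
    have h2 := mul_le_mul_of_nonneg_right hmin2 hB
    calc -Ka * (ex t₀ ^ 2 + ey t₀ ^ 2) - Kθ * eθ t₀ ^ 2
        ≤ -(min Ka Kθ * (ex t₀ ^ 2 + ey t₀ ^ 2)) - min Ka Kθ * eθ t₀ ^ 2 := by linarith
      _ = -min Ka Kθ * (ex t₀ ^ 2 + ey t₀ ^ 2 + eθ t₀ ^ 2) := by ring
  have hterm2 : ε * |eθ t₀| - ex t₀ * xd' - ey t₀ * yd'
      ≤ Real.sqrt (ex t₀ ^ 2 + ey t₀ ^ 2 + eθ t₀ ^ 2)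
          * Real.sqrt (xd' ^ 2 + yd' ^ 2 + ε ^ 2) := by
    have h := cs3_aux (ex t₀) (ey t₀) |eθ t₀| (-xd') (-yd') ε
    rw [sq_abs, show (-xd') ^ 2 = xd' ^ 2 by ring, show (-yd') ^ 2 = yd' ^ 2 by ring] at h
    linarith
  linarith [bound1]
end

section
/- Let E be the Euclidean plane (EuclideanSpace ℝ (Fin 2)) and U : E → ℝ. Let p : ℝ → E, θ : ℝ → ℝ, and fix t₀. Assume U has gradient F ∈ E at p(t₀) with F ≠ 0, and set D = ‖F‖, and let θ_d ∈ ℝ satisfy cos(θ_d) = −F₁/D and sin(θ_d) = −F₂/D, where F₁, F₂ are the two coordinates of F. Let e_θ = θ(t₀) − θ_d, let K > 0 and D_max > 0, and set v = K·cos(e_θ)·min(D_max, D). Assume p has derivative at t₀ equal to the vector with coordinates (v·cos(θ(t₀)), v·sin(θ(t₀))). Then the composite function t ↦ U(p(t)) has derivative at t₀ equal to −K·min(D_max, D)·D·cos²(e_θ); in particular this derivative is nonpositive. -/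
theorem potential_dissipation
    (U : EuclideanSpace ℝ (Fin 2) → ℝ) (p : ℝ → EuclideanSpace ℝ (Fin 2))
    (θ : ℝ → ℝ) (t₀ : ℝ)
    (F : EuclideanSpace ℝ (Fin 2)) (hF : HasGradientAt U F (p t₀)) (hF0 : F ≠ 0)
    (D : ℝ) (hD : D = ‖F‖)
    (θd : ℝ) (hcos : Real.cos θd = -(F 0) / D) (hsin : Real.sin θd = -(F 1) / D)
    (eθ : ℝ) (heθ : eθ = θ t₀ - θd)
    (K Dmax : ℝ) (hK : 0 < K) (hDmax : 0 < Dmax)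
    (v : ℝ) (hv : v = K * Real.cos eθ * min Dmax D)
    (hp : HasDerivAt p
      ((WithLp.equiv 2 (Fin 2 → ℝ)).symm ![v * Real.cos (θ t₀), v * Real.sin (θ t₀)]) t₀) :
    HasDerivAt (fun t => U (p t)) (-(K * min Dmax D * D * Real.cos eθ ^ 2)) t₀ ∧
      -(K * min Dmax D * D * Real.cos eθ ^ 2) ≤ 0 := by
  have hDpos : (0:ℝ) < D := hD ▸ norm_pos_iff.2 hF0
  have hchain := hF.hasFDerivAt.comp_hasDerivAt t₀ hp
  have hinner : (InnerProductSpace.toDual ℝ _ F)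
      ((WithLp.equiv 2 (Fin 2 → ℝ)).symm ![v * Real.cos (θ t₀), v * Real.sin (θ t₀)])
      = -(K * min Dmax D * D * Real.cos eθ ^ 2) := by
    rw [InnerProductSpace.toDual_apply_apply]
    rw [show (inner ℝ F ((WithLp.equiv 2 (Fin 2 → ℝ)).symm ![v * Real.cos (θ t₀), v * Real.sin (θ t₀)]) : ℝ)
      = ∑ i : Fin 2, F i * ((WithLp.equiv 2 (Fin 2 → ℝ)).symm ![v * Real.cos (θ t₀), v * Real.sin (θ t₀)]) i from by simp [PiLp.inner_apply, mul_comm]]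
    have h0 : F 0 = -D * Real.cos θd := by field_simp at hcos; linarith
    have h1 : F 1 = -D * Real.sin θd := by field_simp at hsin; linarith
    simp only [Fin.sum_univ_two, WithLp.equiv_symm_apply, PiLp.toLp_apply, Matrix.cons_val_zero,
      Matrix.cons_val_one, Matrix.head_cons, h0, h1, hv, heθ]
    rw [Real.cos_sub]
    ring
  rw [hinner] at hchain
  refine ⟨hchain, ?_⟩
  have hmin : 0 ≤ min Dmax D := le_min hDmax.le hDpos.le
  have : 0 ≤ K * min Dmax D * D * Real.cos eθ ^ 2 := by positivity
  linarith
end
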